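/- The γ-term map is additive: (f+g)γ = fγ + gγ and (cf)γ = c·(fγ) for all f, g ∈ E, c ∈ C; consequently the map f ↦ (fγ)_{γ∈Γ} from E to E^Γ is injective. -/

import Mathlib

theorem stmt_15
    (C : Type*) [Field C] (E : Type*) [AddCommGroup E] [Module C E]
    (Γ : Type*) [LinearOrder Γ]
    (v : E → WithTop Γ)
    (hv0 : ∀ f : E, v f = ⊤ ↔ f = 0)
    (hvc : ∀ (c : C) (f : E), c ≠ 0 → v (c • f) = v f)
    (hva : ∀ f g : E, min (v f) (v g) ≤ v (f + g))
    (tr : E → Γ → E)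
    (t1 : ∀ (f : E) (α : Γ), (α : WithTop Γ) ≤ v (f - tr f α))
    (t2 : ∀ (f : E) (α : Γ), (α : WithTop Γ) ≤ v f → tr f α = 0)
    (t3 : ∀ (f : E) (α β : Γ), α < β → tr (tr f α) β = tr f α)
    (t4a : ∀ (f g : E) (α : Γ), tr (f + g) α = tr f α + tr g α)
    (t4s : ∀ (c : C) (f : E) (α : Γ), tr (c • f) α = c • tr f α)
    (hwf : ∀ f : E, {γ : Γ | v (f - tr f γ) = (γ : WithTop Γ)}.IsWF)
    (term : E → Γ → E)
    (hterm0 : ∀ (f : E) (γ : Γ), γ ∉ {γ' : Γ | v (f - tr f γ') = (γ' : WithTop Γ)} → term f γ = 0)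
    (hterm1 : ∀ (f : E) (γ : Γ), γ ∈ {γ' : Γ | v (f - tr f γ') = (γ' : WithTop Γ)} →
      (∃ δ : Γ, {γ' : Γ | v (term f γ - tr (term f γ) γ') = (γ' : WithTop Γ)} = {δ}) ∧
      (γ : WithTop Γ) < v (f - tr f γ - term f γ)) :
    (∀ (f g : E) (γ : Γ), term (f + g) γ = term f γ + term g γ) ∧
    (∀ (c : C) (f : E) (γ : Γ), term (c • f) γ = c • term f γ) ∧
    Function.Injective term := by
  have hv0' : v (0 : E) = ⊤ := (hv0 0).2 rfl
  have htr0 : ∀ γ : Γ, tr 0 γ = 0 := fun γ => t2 0 γ (by simp [hv0'])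
  have hsp0 : ∀ γ : Γ, v ((0 : E) - tr 0 γ) ≠ (γ : WithTop Γ) := by
    intro γ; rw [htr0]; simp [hv0']
  have hvneg : ∀ f : E, v (-f) = v f := by
    intro f
    have := hvc (-1) f (by norm_num)
    simpa using this
  have hvsub : ∀ a b : E, min (v a) (v b) ≤ v (a - b) := by
    intro a b
    have := hva a (-b)
    rw [hvneg] at this
    simpa [sub_eq_add_neg] using this
  -- every nonzero f has v f in its spectrum
  have hmem : ∀ f : E, f ≠ 0 →
      ∃ γ : Γ, v f = (γ : WithTop Γ) ∧ v (f - tr f γ) = (γ : WithTop Γ) := by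
    intro f hf
    have h1 : v f ≠ ⊤ := fun h => hf ((hv0 f).1 h)
    obtain ⟨γ, hγ⟩ := WithTop.ne_top_iff_exists.1 h1
    refine ⟨γ, hγ.symm, ?_⟩
    rw [t2 f γ hγ.le, sub_zero, ← hγ]
  -- "Psp h γ" := spectrum of h contained in {γ}
  -- closure under addition
  have hsum : ∀ (h1 h2 : E) (γ : Γ),
      (∀ β : Γ, v (h1 - tr h1 β) = (β : WithTop Γ) → β = γ) →
      (∀ β : Γ, v (h2 - tr h2 β) = (β : WithTop Γ) → β = γ) →
      ∀ β : Γ, v (h1 + h2 - tr (h1 + h2) β) = (β : WithTop Γ) → β = γ := by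
    intro h1 h2 γ hs1 hs2 β hβ
    by_contra hne
    have e1 : (β : WithTop Γ) < v (h1 - tr h1 β) :=
      lt_of_le_of_ne (t1 h1 β) (fun h => hne (hs1 β h.symm))
    have e2 : (β : WithTop Γ) < v (h2 - tr h2 β) :=
      lt_of_le_of_ne (t1 h2 β) (fun h => hne (hs2 β h.symm))
    have key : h1 + h2 - tr (h1 + h2) β = (h1 - tr h1 β) + (h2 - tr h2 β) := by
      rw [t4a]; abel
    have : (β : WithTop Γ) < v (h1 + h2 - tr (h1 + h2) β) := by
      rw [key]
      exact lt_of_lt_of_le (lt_min e1 e2) (hva _ _)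
    rw [hβ] at this
    exact lt_irrefl _ this
  -- closure under scalar multiplication
  have hsmul : ∀ (c : C) (h : E) (γ : Γ), c ≠ 0 →
      (∀ β : Γ, v (h - tr h β) = (β : WithTop Γ) → β = γ) →
      ∀ β : Γ, v (c • h - tr (c • h) β) = (β : WithTop Γ) → β = γ := by
    intro c h γ hc hs β hβ
    apply hs β
    rw [t4s, ← smul_sub, hvc _ _ hc] at hβ
    exact hβ
  -- Psp for negation
  have hneg : ∀ (h : E) (γ : Γ),
      (∀ β : Γ, v (h - tr h β) = (β : WithTop Γ) → β = γ) →
      ∀ β : Γ, v (-h - tr (-h) β) = (β : WithTop Γ) → β = γ := by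
    intro h γ hs β hβ
    apply hs β
    have : -h = (-1 : C) • h := by simp
    rw [this, t4s, ← smul_sub, hvc _ _ (by norm_num : (-1 : C) ≠ 0)] at hβ
    exact hβ
  -- uniqueness
  have hU : ∀ (h1 h2 : E) (γ : Γ),
      (∀ β : Γ, v (h1 - tr h1 β) = (β : WithTop Γ) → β = γ) →
      (∀ β : Γ, v (h2 - tr h2 β) = (β : WithTop Γ) → β = γ) →
      (γ : WithTop Γ) < v (h1 - h2) → h1 = h2 := by
    intro h1 h2 γ hs1 hs2 hlt
    by_contra hne
    have hd : h1 - h2 ≠ 0 := sub_ne_zero.2 hne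
    obtain ⟨β, hβv, hβmem⟩ := hmem (h1 - h2) hd
    have hsd : ∀ β : Γ, v (h1 - h2 - tr (h1 - h2) β) = (β : WithTop Γ) → β = γ := by
      have := hsum h1 (-h2) γ hs1 (hneg h2 γ hs2)
      simpa [sub_eq_add_neg] using this
    have hβγ : β = γ := hsd β hβmem
    rw [hβv, hβγ] at hlt
    exact lt_irrefl _ hlt
  -- characterization of term f γ
  have hPterm : ∀ (f : E) (γ : Γ),
      (∀ β : Γ, v (term f γ - tr (term f γ) β) = (β : WithTop Γ) → β = γ) ∧
      (γ : WithTop Γ) < v (f - tr f γ - term f γ) := by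
    intro f γ
    by_cases hm : γ ∈ {γ' : Γ | v (f - tr f γ') = (γ' : WithTop Γ)}
    · obtain ⟨⟨δ, hδ⟩, hlt⟩ := hterm1 f γ hm
      set h := term f γ with hh
      have hne0 : h ≠ 0 := by
        intro h0
        have : δ ∈ {γ' : Γ | v (h - tr h γ') = (γ' : WithTop Γ)} := by
          rw [hδ]; exact rfl
        rw [h0] at this
        exact hsp0 δ this
      obtain ⟨γ', hγ'v, hγ'mem⟩ := hmem h hne0
      have hγ'δ : γ' = δ := by
        have : γ' ∈ ({δ} : Set Γ) := hδ ▸ hγ'mem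
        exact this
      -- show v h = γ
      have hva' : v (f - tr f γ) = (γ : WithTop Γ) := hm
      have hvh : v h = (γ : WithTop Γ) := by
        have h1 : (γ : WithTop Γ) ≤ v h := by
          have heq2 : h = (f - tr f γ) - (f - tr f γ - h) := by abel
          rw [heq2]
          exact le_trans (le_min hva'.ge hlt.le) (hvsub _ _)
        rcases lt_or_eq_of_le h1 with h2 | h2
        · exfalso
          have : (γ : WithTop Γ) < v (f - tr f γ) := by
            have heq : f - tr f γ = (f - tr f γ - h) + h := by abel
            rw [heq]
            exact lt_of_lt_of_le (lt_min hlt h2) (hva _ _)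
          rw [hva'] at this
          exact lt_irrefl _ this
        · exact h2.symm
      have hδγ : δ = γ := by
        have : (γ' : WithTop Γ) = (γ : WithTop Γ) := hγ'v ▸ hvh
        have := WithTop.coe_injective this
        rw [← hγ'δ, this]
      constructor
      · intro β hβ
        have : β ∈ ({δ} : Set Γ) := hδ ▸ hβ
        rw [← hδγ]; exact this
      · exact hlt
    · rw [hterm0 f γ hm]
      constructor
      · intro β hβ
        exact absurd hβ (hsp0 β)
      · rw [sub_zero]
        exact lt_of_le_of_ne (t1 f γ) (fun h => hm h.symm)
  have hchar : ∀ (f : E) (γ : Γ) (h : E),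
      (∀ β : Γ, v (h - tr h β) = (β : WithTop Γ) → β = γ) →
      (γ : WithTop Γ) < v (f - tr f γ - h) → term f γ = h := by
    intro f γ h hP hlt
    obtain ⟨hP', hlt'⟩ := hPterm f γ
    apply hU _ _ γ hP' hP
    have heq : term f γ - h = (f - tr f γ - h) - (f - tr f γ - term f γ) := by abel
    rw [heq]
    exact lt_of_lt_of_le (lt_min hlt hlt') (hvsub _ _)
  -- additivity
  have hadd : ∀ (f g : E) (γ : Γ), term (f + g) γ = term f γ + term g γ := by
    intro f g γ
    obtain ⟨hPf, hlf⟩ := hPterm f γ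
    obtain ⟨hPg, hlg⟩ := hPterm g γ
    apply hchar
    · exact hsum _ _ γ hPf hPg
    · have heq : f + g - tr (f + g) γ - (term f γ + term g γ) =
          (f - tr f γ - term f γ) + (g - tr g γ - term g γ) := by
        rw [t4a]; abel
      rw [heq]
      exact lt_of_lt_of_le (lt_min hlf hlg) (hva _ _)
  have hterm00 : ∀ γ : Γ, term (0 : E) γ = 0 := fun γ =>
    hterm0 0 γ (hsp0 γ)
  have hsc : ∀ (c : C) (f : E) (γ : Γ), term (c • f) γ = c • term f γ := by
    intro c f γ
    by_cases hc : c = 0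
    · rw [hc, zero_smul, zero_smul, hterm00]
    · obtain ⟨hPf, hlf⟩ := hPterm f γ
      apply hchar
      · exact hsmul c _ γ hc hPf
      · have heq : c • f - tr (c • f) γ - c • term f γ =
            c • (f - tr f γ - term f γ) := by
          rw [t4s]; module
        rw [heq, hvc _ _ hc]
        exact hlf
  refine ⟨hadd, hsc, ?_⟩
  -- injectivity
  intro f g hfg
  by_contra hne
  have hd : f - g ≠ 0 := sub_ne_zero.2 hne
  obtain ⟨γ, hγv, hγmem⟩ := hmem (f - g) hd
  have htd : term (f - g) γ = 0 := by
    have h1 : term (f - g + g) γ = term (f - g) γ + term g γ := hadd _ _ γ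
    rw [sub_add_cancel] at h1
    have h2 : term f γ = term g γ := congrFun hfg γ
    rw [h2] at h1
    exact right_eq_add.mp h1
  obtain ⟨_, hlt⟩ := hterm1 (f - g) γ hγmem
  rw [htd, sub_zero, hγmem] at hlt
  exact lt_irrefl _ hlt
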